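/- arXiv:1302.5756 — 6 statements merged into one kernel-verified Lean document; each statement's English description precedes it below -/
import Mathlib

section
/- If G : Ψ → Φ is a functor between operator categories that preserves terminal objects and the formation of fibers, and for every object I of Ψ the induced map |I| → |GI| on points is surjective, then for every object I of Ψ the map |I| → |GI| is in fact a bijection. -/
open CategoryTheory Limits

universe v u v' u'

/-- An operator category: an essentially small category with a terminal object,
fibers of morphisms over points, and finite hom-sets. -/
class OperatorCategory (C : Type u) [Category.{v} C] where
  /-- a chosen terminal object -/
  One : C
  isTerminalOne : IsTerminal One
  fibers : ∀ {J I : C} (f : J ⟶ I) (i : One ⟶ I), HasPullback i f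
  finiteHom : ∀ I J : C, Finite (I ⟶ J)
  essSmall : EssentiallySmall.{v} C

/-- an operator morphism induces bijections on point sets. -/
theorem operatorMorphism_points_bijective
    {Ψ : Type u} {Φ : Type u'} [Category.{v} Ψ] [Category.{v'} Φ]
    [OperatorCategory Ψ] [OperatorCategory Φ] (G : Ψ ⥤ Φ)
    (hT : IsTerminal (G.obj (OperatorCategory.One : Ψ)))
    (hfib : ∀ {P J I : Ψ} (p₁ : P ⟶ J) (p₂ : P ⟶ (OperatorCategory.One : Ψ))
      (f : J ⟶ I) (i : (OperatorCategory.One : Ψ) ⟶ I),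
      IsPullback p₁ p₂ f i → IsPullback (G.map p₁) (G.map p₂) (G.map f) (G.map i))
    (hsurj : ∀ I : Ψ, Function.Surjective
      (fun j : (OperatorCategory.One : Ψ) ⟶ I =>
        hT.from (OperatorCategory.One : Φ) ≫ G.map j)) :
    ∀ I : Ψ, Function.Bijective
      (fun j : (OperatorCategory.One : Ψ) ⟶ I =>
        hT.from (OperatorCategory.One : Φ) ≫ G.map j) := by
  intro I
  refine ⟨?_, hsurj I⟩
  intro j₁ j₂ h
  dsimp at h
  -- form the pullback (fiber) of j₂ over the point j₁
  haveI : HasPullback j₁ j₂ := OperatorCategory.fibers j₂ j₁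
  have hpb : IsPullback (pullback.snd j₁ j₂) (pullback.fst j₁ j₂) j₂ j₁ :=
    (IsPullback.of_hasPullback j₁ j₂).flip
  -- G preserves this pullback
  have hGpb := hfib _ _ _ _ hpb
  -- the image pullback in Φ has a point, since G j₁ and G j₂ agree on points
  have w : hT.from (OperatorCategory.One : Φ) ≫ G.map j₂ =
      hT.from (OperatorCategory.One : Φ) ≫ G.map j₁ := h.symm
  obtain ⟨p, -⟩ := hsurj _ (hGpb.lift (hT.from _) (hT.from _) w)
  -- use the point p of the fiber to conclude j₁ = j₂
  have e1 : p ≫ pullback.fst j₁ j₂ = 𝟙 _ :=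
    OperatorCategory.isTerminalOne.hom_ext _ _
  have e2 : p ≫ pullback.snd j₁ j₂ = 𝟙 _ :=
    OperatorCategory.isTerminalOne.hom_ext _ _
  calc j₁ = (p ≫ pullback.fst j₁ j₂) ≫ j₁ := by rw [e1, Category.id_comp]
    _ = (p ≫ pullback.snd j₁ j₂) ≫ j₂ := by
        rw [Category.assoc, Category.assoc, pullback.condition]
    _ = j₂ := by rw [e2, Category.id_comp]
end

section
/- Interval inclusions in an operator category are monomorphisms. -/
open CategoryTheory Limits

universe v u v' u'

variable {C : Type u} [Category.{v} C] [OperatorCategory C]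

/-- A fiber inclusion: a morphism that is a pullback of a point `{i} → I`
along some morphism `J → I`. -/
def IsFiberInclusion {K J : C} (k : K ⟶ J) : Prop :=
  ∃ (I : C) (f : J ⟶ I) (i : (OperatorCategory.One : C) ⟶ I),
    IsPullback k (OperatorCategory.isTerminalOne.from K) f i

/-- An interval inclusion: a finite composite of fiber inclusions. -/
inductive IsIntervalInclusion : ∀ {K J : C}, (K ⟶ J) → Prop
  | id (J : C) : IsIntervalInclusion (𝟙 J)
  | comp {L K J : C} {g : L ⟶ K} {f : K ⟶ J} :
      IsFiberInclusion f → IsIntervalInclusion g → IsIntervalInclusion (g ≫ f)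

lemma mono_of_isFiberInclusion {K J : C} {k : K ⟶ J} (h : IsFiberInclusion k) :
    Mono k := by
  obtain ⟨I, f, i, hp⟩ := h
  have hi : Mono i := ⟨fun a b _ => OperatorCategory.isTerminalOne.hom_ext a b⟩
  exact PullbackCone.mono_fst_of_is_pullback_of_mono hp.isLimit

/-- interval inclusions in an operator category are monomorphisms. -/
theorem isIntervalInclusion_mono {K J : C} {f : K ⟶ J}
    (hf : IsIntervalInclusion f) : Mono f := by
  induction hf with
  | id => infer_instance
  | comp hfib _ ih =>
    have := mono_of_isFiberInclusion hfib
    exact mono_comp _ _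
end

section
/- In an operator category Φ, the pullback of any morphism L → J along an interval inclusion K ↪ J exists, and the canonical morphism K ×_J L → L is again an interval inclusion. -/
open CategoryTheory Limits

universe v u v' u'

variable {C : Type u} [Category.{v} C] [OperatorCategory C]

/-- pullbacks along interval inclusions exist, and the projection
to the other leg is again an interval inclusion. -/
theorem pullback_along_intervalInclusion {K J L : C} {k : K ⟶ J}
    (hk : IsIntervalInclusion k) (l : L ⟶ J) :
    ∃ (P : C) (fst : P ⟶ K) (snd : P ⟶ L),
      IsPullback fst snd k l ∧ IsIntervalInclusion snd := by
  induction hk generalizing L with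
  | id =>
      exact ⟨L, l, 𝟙 L, IsPullback.of_vert_isIso ⟨by simp⟩, .id L⟩
  | @comp K' J' g f hf hg IH =>
      obtain ⟨I, h, i, hpb⟩ := hf
      haveI := OperatorCategory.fibers (C := C) (l ≫ h) i
      set Q := pullback i (l ≫ h) with hQ
      have isPB : IsPullback (pullback.fst i (l ≫ h)) (pullback.snd i (l ≫ h)) i (l ≫ h) :=
        IsPullback.of_hasPullback i (l ≫ h)
      set pfst := pullback.fst i (l ≫ h)
      set psnd := pullback.snd i (l ≫ h)
      have w : (psnd ≫ l) ≫ h = pfst ≫ i := by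
        rw [Category.assoc, ← isPB.w]
      -- lift to K'
      set m : Q ⟶ K' := hpb.lift (psnd ≫ l) pfst w with hm
      have hmf : m ≫ f = psnd ≫ l := hpb.lift_fst _ _ _
      have hmfrom : m ≫ OperatorCategory.isTerminalOne.from K' = pfst :=
        (OperatorCategory.isTerminalOne (C := C)).hom_ext _ _
      -- big square : IsPullback psnd (m ≫ from K') (l ≫ h) i
      have big : IsPullback psnd (m ≫ OperatorCategory.isTerminalOne.from K') (l ≫ h) i := by
        rw [hmfrom]; exact isPB.flip
      have mid : IsPullback m psnd f l :=
        (IsPullback.of_bot big hmf.symm hpb).flip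
      have hfib : IsFiberInclusion psnd := by
        refine ⟨I, l ≫ h, i, ?_⟩
        have : OperatorCategory.isTerminalOne.from Q = pfst :=
          OperatorCategory.isTerminalOne.hom_ext _ _
        rw [this]; exact isPB.flip
      obtain ⟨P, fst', snd', hpb2, hint⟩ := IH m
      exact ⟨P, fst', snd' ≫ psnd, hpb2.paste_vert mid, .comp hfib hint⟩
end

section
/- In an operator category Φ, if φ : K ↪ J is an interval inclusion and ψ : L → K is any morphism, then ψ is an interval inclusion if and only if the composite φ ∘ ψ is an interval inclusion. -/
open CategoryTheory Limits

universe v u v' u'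

variable {C : Type u} [Category.{v} C] [OperatorCategory C]

/-- Any isomorphism is a fiber inclusion. -/
lemma IsFiberInclusion.of_isIso {L K : C} (e : L ⟶ K) [IsIso e] : IsFiberInclusion e := by
  refine ⟨OperatorCategory.One, OperatorCategory.isTerminalOne.from K, 𝟙 _, ?_⟩
  exact IsPullback.of_horiz_isIso ⟨OperatorCategory.isTerminalOne.hom_ext _ _⟩

/-- Any isomorphism is an interval inclusion. -/
lemma IsIntervalInclusion.of_isIso {L K : C} (e : L ⟶ K) [IsIso e] : IsIntervalInclusion e := by
  have h := IsIntervalInclusion.comp (IsFiberInclusion.of_isIso e) (IsIntervalInclusion.id L)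
  simpa using h

/-- A fiber inclusion is a monomorphism. -/
lemma IsFiberInclusion.mono {K J : C} {f : K ⟶ J} (hf : IsFiberInclusion f) : Mono f := by
  obtain ⟨I, hm, i, hpb⟩ := hf
  constructor
  intro W a b hab
  exact hpb.hom_ext hab (OperatorCategory.isTerminalOne.hom_ext _ _)

/-- The pullback of a fiber inclusion (along the other leg) is a fiber inclusion. -/
lemma IsFiberInclusion.of_isPullback {P K K' J : C} {p : P ⟶ K} {q : P ⟶ K'}
    {f : K ⟶ J} {f' : K' ⟶ J} (h : IsPullback p q f f') (hf : IsFiberInclusion f) :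
    IsFiberInclusion q := by
  obtain ⟨I, hm, i, hpb⟩ := hf
  have big := h.flip.paste_vert hpb
  have : p ≫ OperatorCategory.isTerminalOne.from K
      = OperatorCategory.isTerminalOne.from P :=
    OperatorCategory.isTerminalOne.hom_ext _ _
  rw [this] at big
  exact ⟨I, f' ≫ hm, i, big⟩

/-- Pullbacks along fiber inclusions exist. -/
lemma exists_pullback_of_fiber {K K' J : C} {f : K ⟶ J} (f' : K' ⟶ J)
    (hf : IsFiberInclusion f) :
    ∃ (P : C) (p : P ⟶ K) (q : P ⟶ K'), IsPullback p q f f' := by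
  obtain ⟨I, hm, i, hpb⟩ := hf
  haveI := OperatorCategory.fibers (f' ≫ hm) i
  set P := pullback i (f' ≫ hm) with hP
  have big := (IsPullback.of_hasPullback i (f' ≫ hm)).flip
  -- big : IsPullback (pullback.snd i (f'≫hm)) (pullback.fst i (f'≫hm)) (f' ≫ hm) i
  have w : (pullback.snd i (f' ≫ hm) ≫ f') ≫ hm = pullback.fst i (f' ≫ hm) ≫ i := by
    rw [Category.assoc]; exact big.w
  set p : P ⟶ K := hpb.lift (pullback.snd i (f' ≫ hm) ≫ f') (pullback.fst i (f' ≫ hm)) w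
    with hpdef
  have hp1 : p ≫ f = pullback.snd i (f' ≫ hm) ≫ f' := hpb.lift_fst _ _ _
  have hp2 : p ≫ OperatorCategory.isTerminalOne.from K = pullback.fst i (f' ≫ hm) :=
    hpb.lift_snd _ _ _
  rw [← hp2] at big
  have top := IsPullback.of_bot big hp1.symm hpb
  exact ⟨P, p, pullback.snd i (f' ≫ hm), top.flip⟩

/-- Cancellation: if `χ ≫ f` is an interval inclusion and `f` is a fiber
inclusion, then `χ` is an interval inclusion. -/
lemma IsIntervalInclusion.cancel_fiber {M J : C} {β : M ⟶ J} (hβ : IsIntervalInclusion β) :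
    ∀ {K : C} (f : K ⟶ J) (χ : M ⟶ K), IsFiberInclusion f → χ ≫ f = β →
      IsIntervalInclusion χ := by
  induction hβ with
  | id =>
    intro K f χ hf he
    haveI hm : Mono f := hf.mono
    have hinv : f ≫ χ = 𝟙 K := by
      have : (f ≫ χ) ≫ f = 𝟙 K ≫ f := by rw [Category.assoc, he, Category.comp_id,
        Category.id_comp]
      exact (cancel_mono f).mp this
    haveI : IsIso χ := ⟨f, he, hinv⟩
    exact IsIntervalInclusion.of_isIso χ
  | @comp K' J' g f' hf' hg ih =>
    intro K f χ hf he
    obtain ⟨P, p, q, hsq⟩ := exists_pullback_of_fiber f' hf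
    have hqfib := IsFiberInclusion.of_isPullback hsq hf
    have hpfib := IsFiberInclusion.of_isPullback hsq.flip hf'
    have hu1 : hsq.lift χ g he ≫ p = χ := hsq.lift_fst _ _ _
    have hu2 : hsq.lift χ g he ≫ q = g := hsq.lift_snd _ _ _
    have huint := ih q _ hqfib hu2
    rw [← hu1]
    exact IsIntervalInclusion.comp hpfib huint

/-- Interval inclusions are closed under composition. -/
lemma IsIntervalInclusion.comp' {L K J : C} {ψ : L ⟶ K} {φ : K ⟶ J}
    (hψ : IsIntervalInclusion ψ) (hφ : IsIntervalInclusion φ) :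
    IsIntervalInclusion (ψ ≫ φ) := by
  induction hφ with
  | id => simpa using hψ
  | comp hf hg ih =>
    rw [← Category.assoc]
    exact IsIntervalInclusion.comp hf ih

/-- if `φ` is an interval inclusion, then `ψ` is an interval
inclusion if and only if `ψ ≫ φ` is. -/
theorem isIntervalInclusion_comp_iff {L K J : C} (ψ : L ⟶ K) {φ : K ⟶ J}
    (hφ : IsIntervalInclusion φ) :
    IsIntervalInclusion ψ ↔ IsIntervalInclusion (ψ ≫ φ) := by
  constructor
  · intro hψ; exact hψ.comp' hφ
  · induction hφ generalizing ψ with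
    | id => intro h; simpa using h
    | comp hf hg ih =>
      intro h
      rw [← Category.assoc] at h
      exact ih _ (h.cancel_fiber _ _ hf rfl)
end

section
/- Let Φ be a perfect operator category with point classifier (T, t) and let T also denote the induced endofunctor I ↦ TI. Then the counit κ : (E I)_t → I of the adjunction (fib ⊣ E) is an isomorphism for every I; i.e., Φ is a colocalization of Φ/T, and for each object I the square with I ↪ TI over {t} ↪ T is a pullback square. -/
open CategoryTheory Limits

universe v u v' u'

variable {Φ : Type u} [Category.{v} Φ] [OperatorCategory Φ]

instance hasPullbackPoint {J I : Φ} (f : J ⟶ I) (i : (OperatorCategory.One : Φ) ⟶ I) :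
    HasPullback i f :=
  OperatorCategory.fibers f i

variable (Φ)

/-- The special fiber functor `fib : Φ/T → Φ`, sending `φ : I → T` to the
fiber `I_t = {t} ×_T I`. -/
noncomputable def fibFunctor (Tobj : Φ) (t : (OperatorCategory.One : Φ) ⟶ Tobj) : Over Tobj ⥤ Φ where
  obj X := pullback t X.hom
  map {X Y} h := pullback.map t X.hom t Y.hom (𝟙 _) h.left (𝟙 _) (by simp) (by simp)
  map_id := by intros; apply pullback.hom_ext <;> simp
  map_comp := by intros; apply pullback.hom_ext <;> simp only [pullback.map, pullback.lift_fst, pullback.lift_snd, pullback.lift_fst_assoc, pullback.lift_snd_assoc, Category.assoc, Over.comp_left, Category.comp_id]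

section Aux

variable {Φ}

lemma one_hom_ext {Z : Φ} (f g : Z ⟶ (OperatorCategory.One : Φ)) : f = g :=
  OperatorCategory.isTerminalOne.hom_ext f g

variable (Tobj : Φ) (t : (OperatorCategory.One : Φ) ⟶ Tobj)
  (E : Φ ⥤ Over Tobj) (adj : fibFunctor Φ Tobj t ⊣ E) (I : Φ)

/-- The transposed map `I ⟶ TI`. -/
noncomputable def uMap : I ⟶ (E.obj I).left :=
  (adj.homEquiv (Over.mk (OperatorCategory.isTerminalOne.from I ≫ t)) I
      (pullback.snd t (OperatorCategory.isTerminalOne.from I ≫ t))).left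

lemma uMap_w : uMap Tobj t E adj I ≫ (E.obj I).hom =
    OperatorCategory.isTerminalOne.from I ≫ t :=
  Over.w _

/-- The canonical comparison map `I ⟶ (E I)_t`. -/
noncomputable def lamMap : I ⟶ pullback t (E.obj I).hom :=
  pullback.lift (OperatorCategory.isTerminalOne.from I) (uMap Tobj t E adj I)
    (uMap_w Tobj t E adj I).symm

lemma fib_map_counit :
    (fibFunctor Φ Tobj t).map
        (adj.homEquiv (Over.mk (OperatorCategory.isTerminalOne.from I ≫ t)) I
          (pullback.snd t (OperatorCategory.isTerminalOne.from I ≫ t))) ≫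
      adj.counit.app I =
    pullback.snd t (OperatorCategory.isTerminalOne.from I ≫ t) := by
  have h1 := adj.homEquiv_counit
    (g := adj.homEquiv (Over.mk (OperatorCategory.isTerminalOne.from I ≫ t)) I
      (pullback.snd t (OperatorCategory.isTerminalOne.from I ≫ t)))
  erw [Equiv.symm_apply_apply] at h1
  exact h1.symm

lemma lam_counit : lamMap Tobj t E adj I ≫ adj.counit.app I = 𝟙 I := by
  set h := adj.homEquiv (Over.mk (OperatorCategory.isTerminalOne.from I ≫ t)) I
    (pullback.snd t (OperatorCategory.isTerminalOne.from I ≫ t)) with hh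
  have hs : (OperatorCategory.isTerminalOne.from I) ≫ t =
      𝟙 I ≫ (Over.mk (OperatorCategory.isTerminalOne.from I ≫ t)).hom := by simp
  have hfac : lamMap Tobj t E adj I =
      pullback.lift (OperatorCategory.isTerminalOne.from I) (𝟙 I) hs ≫
        (fibFunctor Φ Tobj t).map h := by
    apply pullback.hom_ext
    · simp [lamMap, fibFunctor, pullback.lift_fst, pullback.lift_snd, pullback.lift_fst_assoc, pullback.lift_snd_assoc]
    · simp [lamMap, fibFunctor, uMap, hh, pullback.lift_fst, pullback.lift_snd, pullback.lift_fst_assoc, pullback.lift_snd_assoc]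
  erw [hfac, Category.assoc, fib_map_counit]
  simp [pullback.lift_snd]

lemma counit_u :
    adj.counit.app I ≫ uMap Tobj t E adj I = pullback.snd t (E.obj I).hom := by
  set P := pullback t (E.obj I).hom with hP
  set h := adj.homEquiv (Over.mk (OperatorCategory.isTerminalOne.from I ≫ t)) I
    (pullback.snd t (OperatorCategory.isTerminalOne.from I ≫ t)) with hh
  have hk : pullback.snd t (E.obj I).hom ≫ (E.obj I).hom =
      (Over.mk (OperatorCategory.isTerminalOne.from P ≫ t)).hom := by
    rw [← pullback.condition]; simp only [Over.mk_hom]; rw [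
      one_hom_ext (pullback.fst t (E.obj I).hom) (OperatorCategory.isTerminalOne.from P)]
  set k : Over.mk (OperatorCategory.isTerminalOne.from P ≫ t) ⟶ E.obj I :=
    Over.homMk (pullback.snd t (E.obj I).hom) hk with hkdef
  have hm : (adj.counit.app I : (fibFunctor Φ Tobj t).obj (E.obj I) ⟶ I) ≫
      (Over.mk (OperatorCategory.isTerminalOne.from I ≫ t)).hom =
      (Over.mk (OperatorCategory.isTerminalOne.from P ≫ t)).hom := by
    simp only [Over.mk_hom, ← Category.assoc]
    rw [one_hom_ext (adj.counit.app I ≫ OperatorCategory.isTerminalOne.from I)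
      (OperatorCategory.isTerminalOne.from P)]
    rfl
  set m : Over.mk (OperatorCategory.isTerminalOne.from P ≫ t) ⟶
      Over.mk (OperatorCategory.isTerminalOne.from I ≫ t) :=
    Over.homMk (adj.counit.app I) hm with hmdef
  have claim : m ≫ h = k := by
    apply (adj.homEquiv _ I).symm.injective
    erw [Adjunction.homEquiv_naturality_left_symm, hh, Equiv.symm_apply_apply,
      Adjunction.homEquiv_counit]
    have hFk : (fibFunctor Φ Tobj t).map k =
        pullback.snd t (Over.mk (OperatorCategory.isTerminalOne.from P ≫ t)).hom := by
      apply pullback.hom_ext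
      · exact one_hom_ext _ _
      · simp [fibFunctor, hkdef, pullback.lift_fst, pullback.lift_snd, pullback.lift_fst_assoc, pullback.lift_snd_assoc]
    rw [hFk]
    simp [fibFunctor, hmdef, hkdef, pullback.lift_fst, pullback.lift_snd, pullback.lift_fst_assoc, pullback.lift_snd_assoc]
    rfl
  have := congrArg CommaMorphism.left claim
  exact this

lemma counit_lam :
    (adj.counit.app I : (fibFunctor Φ Tobj t).obj (E.obj I) ⟶ I) ≫ lamMap Tobj t E adj I =
      𝟙 ((fibFunctor Φ Tobj t).obj (E.obj I)) := by
  apply pullback.hom_ext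
  · exact one_hom_ext _ _
  · simp only [lamMap, Category.assoc, pullback.lift_snd]; exact (counit_u Tobj t E adj I).trans (Category.id_comp _).symm

end Aux

/-- for a perfect operator category `Φ` (with point classifier
`(T, t)` and right adjoint `E` of the special fiber functor), the counit of the
adjunction `fib ⊣ E` is an isomorphism — `Φ` is a colocalization of `Φ/T` —
and for every object `I` the square with top `ι_I : I → TI`, bottom
`{t} ↪ T` and right-hand map `e_I : TI → T` is a pullback square. -/
theorem perfect_counit_iso_and_unit_pullback (Tobj : Φ)
    (t : (OperatorCategory.One : Φ) ⟶ Tobj)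
    (hclass : ∀ {I : Φ} (i : (OperatorCategory.One : Φ) ⟶ I),
      ∃! χ : I ⟶ Tobj, IsPullback i (𝟙 (OperatorCategory.One : Φ)) χ t)
    (E : Φ ⥤ Over Tobj) (adj : fibFunctor Φ Tobj t ⊣ E) :
    (∀ I : Φ, IsIso (adj.counit.app I)) ∧
    (∀ I : Φ,
      IsPullback
        ((adj.homEquiv (Over.mk (OperatorCategory.isTerminalOne.from I ≫ t)) I
            (pullback.snd t (OperatorCategory.isTerminalOne.from I ≫ t))).left)
        (OperatorCategory.isTerminalOne.from I) ((E.obj I).hom) t) := by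
  constructor
  · intro I
    exact ⟨lamMap Tobj t E adj I, counit_lam Tobj t E adj I, lam_counit Tobj t E adj I⟩
  · intro I
    have comm : CommSq (OperatorCategory.isTerminalOne.from I) (uMap Tobj t E adj I)
        t (E.obj I).hom := ⟨(uMap_w Tobj t E adj I).symm⟩
    exact (IsPullback.of_iso_pullback comm
      ⟨lamMap Tobj t E adj I, adj.counit.app I,
        lam_counit Tobj t E adj I, counit_lam Tobj t E adj I⟩
      (by simp [lamMap, pullback.lift_fst, pullback.lift_snd, pullback.lift_fst_assoc, pullback.lift_snd_assoc]) (by simp [lamMap, pullback.lift_fst, pullback.lift_snd, pullback.lift_fst_assoc, pullback.lift_snd_assoc])).flip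
end

section
/- For any object I of a perfect operator category Φ, the square with horizontal maps ι_I : I → TI, ι_{TI} : TI → T²I and vertical maps the identity on I and the multiplication μ_I : T²I → TI, with bottom map ι_I : I → TI, is a pullback square; that is, the pullback of ι_I : I → TI along μ_I : T²I → TI is ι_{TI}∘ι_I : I → T²I. -/
open CategoryTheory Limits

universe v u v' u'

variable {Φ : Type u} [Category.{v} Φ] [OperatorCategory Φ]

/-- for the canonical monad `T` (with unit `ι` and
multiplication `μ`) on a perfect operator category `Φ`, the square with
horizontal maps `ι_I : I → TI`, `ι_{TI} : TI → T²I`, vertical maps `𝟙 I` and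
`μ_I : T²I → TI` and bottom `ι_I` is a pullback square: the pullback of
`ι_I` along `μ_I` is `ι_{TI} ∘ ι_I`. -/
theorem unit_mul_pullback
    (T : Monad Φ) (Tobj : Φ) (t : (OperatorCategory.One : Φ) ⟶ Tobj)
    (e : ∀ I : Φ, T.obj I ⟶ Tobj)
    (he : ∀ {I J : Φ} (f : I ⟶ J), T.map f ≫ e J = e I)
    -- `(T, t)` is a point classifier for `Φ`
    (hclass : ∀ {I : Φ} (i : (OperatorCategory.One : Φ) ⟶ I),
      ∃! χ : I ⟶ Tobj, IsPullback i (𝟙 (OperatorCategory.One : Φ)) χ t)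
    -- the unit `ι_I` exhibits `I` as the special fiber of `e_I : TI → T`
    (hη : ∀ I : Φ,
      IsPullback (T.η.app I) (OperatorCategory.isTerminalOne.from I) (e I) t)
    -- `E` is right adjoint to the special fiber functor: morphisms `X ⟶ TI`
    -- over `T` correspond bijectively to morphisms from the special fiber of
    -- `X` to `I`
    (huniv : ∀ {X : Φ} (q : X ⟶ Tobj) {P : Φ} (p₁ : P ⟶ X)
      (p₂ : P ⟶ (OperatorCategory.One : Φ)) (hP : IsPullback p₁ p₂ q t) (I : Φ),
      Function.Bijective (fun g : {g : X ⟶ T.obj I // g ≫ e I = q} =>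
        (hη I).lift (p₁ ≫ g.1) p₂ (by rw [Category.assoc, g.2, hP.w])))
    -- `χ_t : TT → T` classifies the point `ι_T(t)` of `TT`
    (χt : T.obj Tobj ⟶ Tobj)
    (hχt : IsPullback (t ≫ T.η.app Tobj) (𝟙 (OperatorCategory.One : Φ)) χt t)
    -- the defining property of the multiplication `μ`
    (hμ : ∀ I : Φ, T.μ.app I ≫ e I = T.map (e I) ≫ χt)
    (I : Φ) :
    IsPullback (T.η.app I ≫ T.η.app (T.obj I)) (𝟙 I) (T.μ.app I) (T.η.app I) := by
  -- η is cartesian: each naturality square is a pullback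
  have cart : ∀ {A B : Φ} (f : A ⟶ B),
      IsPullback (T.η.app A) f (T.map f) (T.η.app B) := by
    intro A B f
    refine IsPullback.of_bot ?_ (T.η.naturality f).symm (hη B)
    have h1 : f ≫ OperatorCategory.isTerminalOne.from B
        = OperatorCategory.isTerminalOne.from A :=
      OperatorCategory.isTerminalOne.hom_ext _ _
    rw [h1, he f]
    exact hη A
  -- paste hη I with the cartesian square at e I, then with the χt square
  have D := (hη I).paste_horiz (cart (e I))
  have total := D.paste_vert hχt
  have h2 : OperatorCategory.isTerminalOne.from I
        ≫ 𝟙 (OperatorCategory.One : Φ)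
      = 𝟙 I ≫ OperatorCategory.isTerminalOne.from I :=
    OperatorCategory.isTerminalOne.hom_ext _ _
  rw [h2, ← hμ I] at total
  exact total.of_bot (by simp) (hη I)
end
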